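/- For every j∈{1,…,M}, the sets Γ_N^{(j)} = {π∈S^M : V^N(π)=h(π)=h_j(π)}, N≥0, form a nonincreasing sequence (Γ_{N+1}^{(j)} ⊆ Γ_N^{(j)}) of nonempty, closed, convex subsets of S^M, and Γ^{(j)} := {π∈S^M : V₀(π)=h(π)=h_j(π)} equals ∩_{N≥0} Γ_N^{(j)} and is itself a nonempty, closed, convex subset of S^M; moreover Γ := {π∈S^M : V₀(π)=h(π)} = ∪_{j=1}^M Γ^{(j)} = ∩_{N≥0}{π∈S^M : V^N(π)=h(π)}. -/

import Mathlib

open MeasureTheory Finset Filter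
open scoped ENNReal

noncomputable section

/-- The analytic data of the change-diagnosis problem: a σ-finite reference measure `m`
on the observation space, probability densities `f₀, …, f_M`, the geometric parameter
`p ∈ (0,1)`, the prior `ν` on the change index, the delay cost `c > 0` and the
terminal-decision costs `a_{ij}` (with `a_{ii} = 0`). -/
structure DiagSetup (E : Type*) [MeasurableSpace E] (M : ℕ) : Type _ where
  /-- σ-finite reference measure -/
  m : Measure E
  hm : SigmaFinite m
  /-- `f 0` is the pre-change density, `f i.succ` the post-change densities -/
  f : Fin (M + 1) → E → ℝ
  hf_meas : ∀ i, Measurable (f i)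
  hf_nonneg : ∀ i x, 0 ≤ f i x
  hf_int : ∀ i, ∫ x, f i x ∂m = 1
  p : ℝ
  hp : p ∈ Set.Ioo (0 : ℝ) 1
  ν : Fin M → ℝ
  hν : ∀ i, 0 < ν i
  hνsum : ∑ i, ν i = 1
  c : ℝ
  hc : 0 < c
  a : Fin (M + 1) → Fin M → ℝ
  ha : ∀ i j, 0 ≤ a i j
  haii : ∀ i : Fin M, a i.succ i = 0
  hM : 1 ≤ M

namespace DiagSetup

variable {E : Type*} [MeasurableSpace E] {M : ℕ}

/-- `D_i(π, x)`:  `D₀(π,x) = (1-p)π₀f₀(x)` and `D_i(π,x) = (π_i + π₀ p ν_i) f_i(x)`. -/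
def D (S : DiagSetup E M) (i : Fin (M + 1)) (π : Fin (M + 1) → ℝ) (x : E) : ℝ :=
  Fin.cases ((1 - S.p) * π 0 * S.f 0 x)
    (fun j => (π j.succ + π 0 * S.p * S.ν j) * S.f j.succ x) i

/-- `D(π, x) = Σ_{i=0}^M D_i(π, x)`. -/
def Dsum (S : DiagSetup E M) (π : Fin (M + 1) → ℝ) (x : E) : ℝ :=
  ∑ i, S.D i π x

/-- The operator `T`:
`(Tg)(π) = ∫_E D(π,x) g(D₀(π,x)/D(π,x), …, D_M(π,x)/D(π,x)) m(dx)`,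
with the integrand interpreted as `0` where `D(π,x) = 0`. -/
def T (S : DiagSetup E M) (g : (Fin (M + 1) → ℝ) → ℝ) (π : Fin (M + 1) → ℝ) : ℝ :=
  ∫ x, (if S.Dsum π x = 0 then 0
        else S.Dsum π x * g fun i => S.D i π x / S.Dsum π x) ∂S.m

/-- `h_j(π) = Σ_{i=0}^M π_i a_{ij}`. -/
def hj (S : DiagSetup E M) (j : Fin M) (π : Fin (M + 1) → ℝ) : ℝ :=
  ∑ i : Fin (M + 1), π i * S.a i j

/-- `h(π) = min_{j∈{1,…,M}} h_j(π)`. -/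
def hmin (S : DiagSetup E M) (π : Fin (M + 1) → ℝ) : ℝ :=
  ⨅ j : Fin M, S.hj j π

/-- The dynamic-programming operator `(𝕄g)(π) = min{h(π), c(1-π₀) + (Tg)(π)}`. -/
def Mop (S : DiagSetup E M) (g : (Fin (M + 1) → ℝ) → ℝ) (π : Fin (M + 1) → ℝ) : ℝ :=
  min (S.hmin π) (S.c * (1 - π 0) + S.T g π)

/-- `V^N = 𝕄^N h`, the value functions of the truncated problems. -/
def V (S : DiagSetup E M) (N : ℕ) : (Fin (M + 1) → ℝ) → ℝ :=
  S.Mop^[N] S.hmin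

end DiagSetup

namespace DiagSetup

variable {E : Type*} [MeasurableSpace E] {M : ℕ}

/-- `Γ_N^{(j)} = {π ∈ S^M : V^N(π) = h(π) = h_j(π)}`. -/
def GammaN (S : DiagSetup E M) (j : Fin M) (N : ℕ) : Set (Fin (M + 1) → ℝ) :=
  {π | π ∈ stdSimplex ℝ (Fin (M + 1)) ∧ S.V N π = S.hmin π ∧ S.hmin π = S.hj j π}

/-- `Γ_N = {π ∈ S^M : V^N(π) = h(π)}`. -/
def GammaNAll (S : DiagSetup E M) (N : ℕ) : Set (Fin (M + 1) → ℝ) :=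
  {π | π ∈ stdSimplex ℝ (Fin (M + 1)) ∧ S.V N π = S.hmin π}

/-- `Γ^{(j)} = {π ∈ S^M : V₀(π) = h(π) = h_j(π)}`. -/
def Gamma (S : DiagSetup E M) (V0 : (Fin (M + 1) → ℝ) → ℝ) (j : Fin M) :
    Set (Fin (M + 1) → ℝ) :=
  {π | π ∈ stdSimplex ℝ (Fin (M + 1)) ∧ V0 π = S.hmin π ∧ S.hmin π = S.hj j π}

/-- `Γ = {π ∈ S^M : V₀(π) = h(π)}`, the optimal stopping region. -/
def GammaAll (S : DiagSetup E M) (V0 : (Fin (M + 1) → ℝ) → ℝ) :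
    Set (Fin (M + 1) → ℝ) :=
  {π | π ∈ stdSimplex ℝ (Fin (M + 1)) ∧ V0 π = S.hmin π}

end DiagSetup
namespace DiagSetup

variable {E : Type*} [MeasurableSpace E] {M : ℕ} (S : DiagSetup E M)

local notation "Δ" => stdSimplex ℝ (Fin (M + 1))

/-- The coefficient of `f i x` in `D i π x`. -/
def coef (i : Fin (M + 1)) (π : Fin (M + 1) → ℝ) : ℝ :=
  Fin.cases ((1 - S.p) * π 0) (fun j => π j.succ + π 0 * S.p * S.ν j) i

lemma D_eq (i : Fin (M + 1)) (π : Fin (M + 1) → ℝ) (x : E) :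
    S.D i π x = S.coef i π * S.f i x := by
  induction i using Fin.cases <;> simp [D, coef, mul_assoc]

lemma mem_le_one' {π : Fin (M + 1) → ℝ} (hπ : π ∈ Δ) (i : Fin (M + 1)) : π i ≤ 1 := by
  rcases hπ with ⟨h0, h1⟩
  calc π i ≤ ∑ k, π k := Finset.single_le_sum (fun k _ => h0 k) (Finset.mem_univ i)
  _ = 1 := h1

lemma ν_le_one (j : Fin M) : S.ν j ≤ 1 := by
  calc S.ν j ≤ ∑ k, S.ν k :=
        Finset.single_le_sum (fun k _ => (S.hν k).le) (Finset.mem_univ j)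
  _ = 1 := S.hνsum

lemma coef_nonneg {π : Fin (M + 1) → ℝ} (hπ : π ∈ Δ) (i : Fin (M + 1)) :
    0 ≤ S.coef i π := by
  induction i using Fin.cases with
  | zero =>
    exact mul_nonneg (by linarith [S.hp.2]) (hπ.1 0)
  | succ j =>
    have := hπ.1 j.succ
    have := hπ.1 0
    have := (S.hν j).le
    have := S.hp.1.le
    simp only [coef, Fin.cases_succ]
    positivity

lemma coef_le_two {π : Fin (M + 1) → ℝ} (hπ : π ∈ Δ) (i : Fin (M + 1)) :
    S.coef i π ≤ 2 := by
  have h1 : π 0 ≤ 1 := mem_le_one' hπ 0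
  have h0 : 0 ≤ π 0 := hπ.1 0
  induction i using Fin.cases with
  | zero =>
    simp only [coef, Fin.cases_zero]
    nlinarith [S.hp.1, S.hp.2]
  | succ j =>
    have h2 : π j.succ ≤ 1 := mem_le_one' hπ j.succ
    have h3 := S.ν_le_one j
    have h4 := (S.hν j).le
    simp only [coef, Fin.cases_succ]
    have h5 : π 0 * S.p ≤ 1 * S.p := mul_le_mul_of_nonneg_right h1 S.hp.1.le
    have h6 : π 0 * S.p * S.ν j ≤ S.p * 1 :=
      mul_le_mul (by linarith) h3 h4 S.hp.1.le
    nlinarith [S.hp.2]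

lemma coef_comb (i : Fin (M + 1)) (πa πb : Fin (M + 1) → ℝ) (t s : ℝ) :
    S.coef i (t • πa + s • πb) = t * S.coef i πa + s * S.coef i πb := by
  induction i using Fin.cases <;>
    simp only [coef, Fin.cases_zero, Fin.cases_succ, Pi.add_apply, Pi.smul_apply,
      smul_eq_mul] <;> ring

lemma coef_continuous (i : Fin (M + 1)) : Continuous fun π : Fin (M + 1) → ℝ => S.coef i π := by
  induction i using Fin.cases with
  | zero => exact continuous_const.mul (continuous_apply 0)
  | succ j =>
    simp only [coef, Fin.cases_succ]
    exact (continuous_apply _).add (((continuous_apply 0).mul continuous_const).mul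
      continuous_const)

lemma D_nonneg {π : Fin (M + 1) → ℝ} (hπ : π ∈ Δ) (i : Fin (M + 1)) (x : E) :
    0 ≤ S.D i π x := by
  rw [D_eq]; exact mul_nonneg (S.coef_nonneg hπ i) (S.hf_nonneg i x)

lemma Dsum_nonneg {π : Fin (M + 1) → ℝ} (hπ : π ∈ Δ) (x : E) : 0 ≤ S.Dsum π x :=
  Finset.sum_nonneg fun i _ => S.D_nonneg hπ i x

lemma Dsum_comb (πa πb : Fin (M + 1) → ℝ) (t s : ℝ) (x : E) :
    S.Dsum (t • πa + s • πb) x = t * S.Dsum πa x + s * S.Dsum πb x := by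
  simp only [Dsum, D_eq, coef_comb, add_mul, mul_assoc, Finset.sum_add_distrib,
    Finset.mul_sum]

lemma Dsum_le {π : Fin (M + 1) → ℝ} (hπ : π ∈ Δ) (x : E) :
    S.Dsum π x ≤ ∑ i, 2 * S.f i x := by
  refine Finset.sum_le_sum fun i _ => ?_
  rw [D_eq]
  exact mul_le_mul_of_nonneg_right (S.coef_le_two hπ i) (S.hf_nonneg i x)

lemma Dsum_measurable (π : Fin (M + 1) → ℝ) : Measurable fun x => S.Dsum π x := by
  simp only [Dsum, D_eq]
  exact Finset.measurable_sum _ fun i _ => (S.hf_meas i).const_mul _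

lemma Dsum_continuous (x : E) : Continuous fun π => S.Dsum π x := by
  simp only [Dsum, D_eq]
  exact continuous_finset_sum _ fun i _ => (S.coef_continuous i).mul continuous_const

lemma f_integrable (i : Fin (M + 1)) : Integrable (S.f i) S.m := by
  by_contra h
  have := S.hf_int i
  rw [integral_undef h] at this
  exact one_ne_zero this.symm

lemma bound_integrable : Integrable (fun x => ∑ i, 2 * S.f i x) S.m :=
  integrable_finset_sum _ fun i _ => (S.f_integrable i).const_mul 2

lemma ratio_mem {π : Fin (M + 1) → ℝ} (hπ : π ∈ Δ) {x : E} (hx : S.Dsum π x ≠ 0) :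
    (fun i => S.D i π x / S.Dsum π x) ∈ Δ := by
  constructor
  · intro i
    exact div_nonneg (S.D_nonneg hπ i x) (S.Dsum_nonneg hπ x)
  · rw [← Finset.sum_div]
    exact div_self hx


/-- Uniform bound for `hmin` on the simplex. -/
def AA : ℝ := ∑ i, S.a i ⟨0, S.hM⟩

lemma AA_nonneg : 0 ≤ S.AA := Finset.sum_nonneg fun i _ => S.ha i _

lemma hj_nonneg (j : Fin M) {π : Fin (M + 1) → ℝ} (hπ : π ∈ Δ) : 0 ≤ S.hj j π :=
  Finset.sum_nonneg fun i _ => mul_nonneg (hπ.1 i) (S.ha i j)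

lemma hmin_le_hj (j : Fin M) (π : Fin (M + 1) → ℝ) : S.hmin π ≤ S.hj j π := by
  haveI : Nonempty (Fin M) := ⟨⟨0, S.hM⟩⟩
  exact ciInf_le (Set.Finite.bddBelow (Set.finite_range _)) j

lemma hmin_nonneg {π : Fin (M + 1) → ℝ} (hπ : π ∈ Δ) : 0 ≤ S.hmin π := by
  haveI : Nonempty (Fin M) := ⟨⟨0, S.hM⟩⟩
  exact le_ciInf fun j => S.hj_nonneg j hπ

lemma hmin_le_AA {π : Fin (M + 1) → ℝ} (hπ : π ∈ Δ) : S.hmin π ≤ S.AA := by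
  refine (S.hmin_le_hj ⟨0, S.hM⟩ π).trans ?_
  refine Finset.sum_le_sum fun i _ => ?_
  calc π i * S.a i _ ≤ 1 * S.a i _ :=
        mul_le_mul_of_nonneg_right (mem_le_one' hπ i) (S.ha i _)
  _ = S.a i _ := one_mul _

lemma hj_comb (j : Fin M) (πa πb : Fin (M + 1) → ℝ) (t s : ℝ) :
    S.hj j (t • πa + s • πb) = t * S.hj j πa + s * S.hj j πb := by
  simp only [hj, Pi.add_apply, Pi.smul_apply, smul_eq_mul, add_mul, mul_assoc,
    Finset.sum_add_distrib, Finset.mul_sum]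

lemma hj_continuous (j : Fin M) : Continuous (S.hj j) :=
  continuous_finset_sum _ fun i _ => (continuous_apply i).mul continuous_const

lemma hj_concaveOn (j : Fin M) : ConcaveOn ℝ Δ (S.hj j) := by
  refine ⟨convex_stdSimplex ℝ _, fun x _ y _ t s ht hs hts => ?_⟩
  rw [hj_comb]
  simp [smul_eq_mul]

lemma hj_convexOn (j : Fin M) : ConvexOn ℝ Δ (S.hj j) := by
  refine ⟨convex_stdSimplex ℝ _, fun x _ y _ t s ht hs hts => ?_⟩
  rw [hj_comb]
  simp [smul_eq_mul]

lemma hmin_concaveOn : ConcaveOn ℝ Δ S.hmin := by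
  haveI : Nonempty (Fin M) := ⟨⟨0, S.hM⟩⟩
  refine ⟨convex_stdSimplex ℝ _, fun x hx y hy t s ht hs hts => ?_⟩
  refine le_ciInf fun j => ?_
  rw [hj_comb]
  have h1 := S.hmin_le_hj j x
  have h2 := S.hmin_le_hj j y
  simp only [smul_eq_mul]
  nlinarith

lemma hmin_continuous : Continuous S.hmin := by
  haveI : Nonempty (Fin M) := ⟨⟨0, S.hM⟩⟩
  have h : S.hmin = fun π => Finset.univ.inf' Finset.univ_nonempty fun j => S.hj j π :=
    funext fun π => (Finset.inf'_univ_eq_ciInf _).symm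
  rw [h]
  exact Continuous.finset_inf'_apply _ fun j _ => S.hj_continuous j

lemma hmin_measurable : Measurable S.hmin := S.hmin_continuous.measurable


/-- The integrand of the operator `T`. -/
def F (g : (Fin (M + 1) → ℝ) → ℝ) (π : Fin (M + 1) → ℝ) (x : E) : ℝ :=
  if S.Dsum π x = 0 then 0
  else S.Dsum π x * g fun i => S.D i π x / S.Dsum π x

lemma T_eq (g : (Fin (M + 1) → ℝ) → ℝ) (π : Fin (M + 1) → ℝ) :
    S.T g π = ∫ x, S.F g π x ∂S.m := rfl

/-- The standing hypotheses propagated through the value iteration. -/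
def Good (g : (Fin (M + 1) → ℝ) → ℝ) : Prop :=
  Measurable g ∧ ContinuousOn g Δ ∧ ConcaveOn ℝ Δ g ∧
    (∀ π ∈ Δ, 0 ≤ g π) ∧ (∀ π ∈ Δ, g π ≤ S.hmin π)

lemma Good.bound {g : (Fin (M + 1) → ℝ) → ℝ} (hg : S.Good g) {π : Fin (M + 1) → ℝ}
    (hπ : π ∈ Δ) : g π ≤ S.AA :=
  (hg.2.2.2.2 π hπ).trans (S.hmin_le_AA hπ)

lemma F_nonneg {g : (Fin (M + 1) → ℝ) → ℝ} (hg : S.Good g) {π : Fin (M + 1) → ℝ}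
    (hπ : π ∈ Δ) (x : E) : 0 ≤ S.F g π x := by
  unfold F
  split_ifs with h
  · exact le_refl 0
  · exact mul_nonneg (S.Dsum_nonneg hπ x)
      (hg.2.2.2.1 _ (S.ratio_mem hπ h))

lemma F_le {g : (Fin (M + 1) → ℝ) → ℝ} (hg : S.Good g) {π : Fin (M + 1) → ℝ}
    (hπ : π ∈ Δ) (x : E) : S.F g π x ≤ S.AA * ∑ i, 2 * S.f i x := by
  have hGnn : (0:ℝ) ≤ ∑ i, 2 * S.f i x :=
    Finset.sum_nonneg fun i _ => by have := S.hf_nonneg i x; linarith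
  unfold F
  split_ifs with h
  · exact mul_nonneg S.AA_nonneg hGnn
  · calc S.Dsum π x * g (fun i => S.D i π x / S.Dsum π x)
        ≤ S.Dsum π x * S.AA :=
          mul_le_mul_of_nonneg_left (Good.bound S hg (S.ratio_mem hπ h))
            (S.Dsum_nonneg hπ x)
    _ = S.AA * S.Dsum π x := mul_comm _ _
    _ ≤ S.AA * ∑ i, 2 * S.f i x :=
          mul_le_mul_of_nonneg_left (S.Dsum_le hπ x) S.AA_nonneg

lemma F_measurable {g : (Fin (M + 1) → ℝ) → ℝ} (hg : Measurable g)
    (π : Fin (M + 1) → ℝ) : Measurable fun x => S.F g π x := by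
  unfold F
  refine Measurable.ite ?_ measurable_const ?_
  · exact (S.Dsum_measurable π) (measurableSet_singleton 0)
  · refine (S.Dsum_measurable π).mul (hg.comp ?_)
    refine measurable_pi_lambda _ fun i => ?_
    have hD : Measurable fun x => S.D i π x := by
      simp only [D_eq]; exact (S.hf_meas i).const_mul _
    exact hD.div (S.Dsum_measurable π)

lemma AAbound_integrable : Integrable (fun x => S.AA * ∑ i, 2 * S.f i x) S.m :=
  S.bound_integrable.const_mul _

lemma F_integrable {g : (Fin (M + 1) → ℝ) → ℝ} (hg : S.Good g) {π : Fin (M + 1) → ℝ}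
    (hπ : π ∈ Δ) : Integrable (fun x => S.F g π x) S.m := by
  refine S.AAbound_integrable.mono' ((S.F_measurable hg.1 π).aestronglyMeasurable)
    (Filter.Eventually.of_forall fun x => ?_)
  rw [Real.norm_eq_abs, abs_of_nonneg (S.F_nonneg hg hπ x)]
  exact S.F_le hg hπ x

lemma T_nonneg {g : (Fin (M + 1) → ℝ) → ℝ} (hg : S.Good g) {π : Fin (M + 1) → ℝ}
    (hπ : π ∈ Δ) : 0 ≤ S.T g π := by
  rw [T_eq]
  exact integral_nonneg fun x => S.F_nonneg hg hπ x

lemma T_mono {g₁ g₂ : (Fin (M + 1) → ℝ) → ℝ} (hg₁ : S.Good g₁) (hg₂ : S.Good g₂)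
    (hle : ∀ π ∈ Δ, g₁ π ≤ g₂ π) {π : Fin (M + 1) → ℝ} (hπ : π ∈ Δ) :
    S.T g₁ π ≤ S.T g₂ π := by
  rw [T_eq, T_eq]
  refine integral_mono_of_nonneg (Filter.Eventually.of_forall fun x => S.F_nonneg hg₁ hπ x)
    (S.F_integrable hg₂ hπ) (Filter.Eventually.of_forall fun x => ?_)
  unfold F
  split_ifs with h
  · exact le_refl 0
  · exact mul_le_mul_of_nonneg_left (hle _ (S.ratio_mem hπ h)) (S.Dsum_nonneg hπ x)


lemma D_comb (i : Fin (M + 1)) (πa πb : Fin (M + 1) → ℝ) (t s : ℝ) (x : E) :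
    S.D i (t • πa + s • πb) x = t * S.D i πa x + s * S.D i πb x := by
  simp only [D_eq, coef_comb]; ring

lemma D_eq_zero {π : Fin (M + 1) → ℝ} (hπ : π ∈ Δ) {x : E} (h : S.Dsum π x = 0)
    (i : Fin (M + 1)) : S.D i π x = 0 :=
  (Finset.sum_eq_zero_iff_of_nonneg fun k _ => S.D_nonneg hπ k x).1 h i (Finset.mem_univ i)

lemma F_superadd {g : (Fin (M + 1) → ℝ) → ℝ} (hg : S.Good g)
    {πa πb : Fin (M + 1) → ℝ} (hπa : πa ∈ Δ) (hπb : πb ∈ Δ)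
    {t s : ℝ} (ht : 0 ≤ t) (hs : 0 ≤ s) (hts : t + s = 1) (x : E) :
    t * S.F g πa x + s * S.F g πb x ≤ S.F g (t • πa + s • πb) x := by
  have hu0 : 0 ≤ S.Dsum πa x := S.Dsum_nonneg hπa x
  have hv0 : 0 ≤ S.Dsum πb x := S.Dsum_nonneg hπb x
  set u := S.Dsum πa x with hu
  set v := S.Dsum πb x with hv
  have hπ : t • πa + s • πb ∈ Δ := convex_stdSimplex ℝ _ hπa hπb ht hs hts
  have hw : S.Dsum (t • πa + s • πb) x = t * u + s * v := S.Dsum_comb πa πb t s x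
  have htu : 0 ≤ t * u := mul_nonneg ht hu0
  have hsv : 0 ≤ s * v := mul_nonneg hs hv0
  by_cases hwz : t * u + s * v = 0
  · have hF : S.F g (t • πa + s • πb) x = 0 := by
      unfold F; rw [hw]; exact if_pos hwz
    have htu0 : t * u = 0 := by linarith
    have hsv0 : s * v = 0 := by linarith
    have h1 : t * S.F g πa x = 0 := by
      rcases mul_eq_zero.1 htu0 with h | h
      · rw [h, zero_mul]
      · have : S.F g πa x = 0 := by unfold F; exact if_pos h
        rw [this, mul_zero]
    have h2 : s * S.F g πb x = 0 := by
      rcases mul_eq_zero.1 hsv0 with h | h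
      · rw [h, zero_mul]
      · have : S.F g πb x = 0 := by unfold F; exact if_pos h
        rw [this, mul_zero]
    rw [hF, h1, h2]; norm_num
  · have hwpos : 0 < t * u + s * v := lt_of_le_of_ne (by linarith) (Ne.symm hwz)
    have hFc : S.F g (t • πa + s • πb) x = (t * u + s * v) *
        g fun i => (t * S.D i πa x + s * S.D i πb x) / (t * u + s * v) := by
      unfold F; rw [hw, if_neg hwz]
      congr 2
      funext i
      rw [S.D_comb i πa πb t s x]
    by_cases huz : u = 0
    · have hFa : S.F g πa x = 0 := by unfold F; exact if_pos huz
      have hsvne : s * v ≠ 0 := by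
        intro h; apply hwz; rw [huz] at *; linarith [mul_eq_zero.1 h]
      have hsne : s ≠ 0 := fun h => hsvne (by rw [h, zero_mul])
      have hvne : v ≠ 0 := fun h => hsvne (by rw [h, mul_zero])
      have hFb : S.F g πb x = v * g fun i => S.D i πb x / v := by
        unfold F; rw [if_neg hvne]
      have hzeq : (fun i => (t * S.D i πa x + s * S.D i πb x) / (t * u + s * v)) =
          fun i => S.D i πb x / v := by
        funext i
        rw [S.D_eq_zero hπa huz i, huz]
        field_simp
        ring
      rw [hFc, hzeq, hFa, hFb, huz]
      simp only [mul_zero, zero_add, mul_assoc, le_refl]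
    by_cases hvz : v = 0
    · have hFb : S.F g πb x = 0 := by unfold F; exact if_pos hvz
      have htune : t * u ≠ 0 := by
        intro h; apply hwz; rw [hvz] at *; linarith [mul_eq_zero.1 h]
      have htne : t ≠ 0 := fun h => htune (by rw [h, zero_mul])
      have hune : u ≠ 0 := fun h => htune (by rw [h, mul_zero])
      have hFa : S.F g πa x = u * g fun i => S.D i πa x / u := by
        unfold F; rw [if_neg hune]
      have hzeq : (fun i => (t * S.D i πa x + s * S.D i πb x) / (t * u + s * v)) =
          fun i => S.D i πa x / u := by
        funext i
        rw [S.D_eq_zero hπb hvz i, hvz]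
        field_simp
        ring
      rw [hFc, hzeq, hFa, hFb, hvz]
      simp only [mul_zero, add_zero, zero_add, mul_assoc, le_refl]
    · -- main case: both strictly positive
      have hupos : 0 < u := lt_of_le_of_ne hu0 (Ne.symm huz)
      have hvpos : 0 < v := lt_of_le_of_ne hv0 (Ne.symm hvz)
      have hza : (fun i => S.D i πa x / u) ∈ Δ := S.ratio_mem hπa huz
      have hzb : (fun i => S.D i πb x / v) ∈ Δ := S.ratio_mem hπb hvz
      have hwa : 0 ≤ t * u / (t * u + s * v) := div_nonneg htu hwpos.le
      have hwb : 0 ≤ s * v / (t * u + s * v) := div_nonneg hsv hwpos.le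
      have hwab : t * u / (t * u + s * v) + s * v / (t * u + s * v) = 1 := by
        field_simp
      have key := hg.2.2.1.2 hza hzb hwa hwb hwab
      have hzeq : ((t * u / (t * u + s * v)) • (fun i => S.D i πa x / u) +
          (s * v / (t * u + s * v)) • fun i => S.D i πb x / v) =
          fun i => (t * S.D i πa x + s * S.D i πb x) / (t * u + s * v) := by
        funext i
        simp only [Pi.add_apply, Pi.smul_apply, smul_eq_mul]
        field_simp
      rw [hzeq] at key
      simp only [smul_eq_mul] at key
      have hFa : S.F g πa x = u * g fun i => S.D i πa x / u := by
        unfold F; rw [if_neg huz]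
      have hFb : S.F g πb x = v * g fun i => S.D i πb x / v := by
        unfold F; rw [if_neg hvz]
      rw [hFc, hFa, hFb]
      have := mul_le_mul_of_nonneg_left key hwpos.le
      calc t * (u * g fun i => S.D i πa x / u) + s * (v * g fun i => S.D i πb x / v)
          = (t * u + s * v) * (t * u / (t * u + s * v) * g (fun i => S.D i πa x / u) +
              s * v / (t * u + s * v) * g fun i => S.D i πb x / v) := by
            field_simp
      _ ≤ (t * u + s * v) *
            g fun i => (t * S.D i πa x + s * S.D i πb x) / (t * u + s * v) := this

lemma T_concaveOn {g : (Fin (M + 1) → ℝ) → ℝ} (hg : S.Good g) :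
    ConcaveOn ℝ Δ (S.T g) := by
  refine ⟨convex_stdSimplex ℝ _, fun πa ha πb hb t s ht hs hts => ?_⟩
  have hπ : t • πa + s • πb ∈ Δ := convex_stdSimplex ℝ _ ha hb ht hs hts
  simp only [smul_eq_mul, T_eq]
  calc t * (∫ x, S.F g πa x ∂S.m) + s * ∫ x, S.F g πb x ∂S.m
      = ∫ x, (t * S.F g πa x + s * S.F g πb x) ∂S.m := by
        rw [integral_add ((S.F_integrable hg ha).const_mul t)
          ((S.F_integrable hg hb).const_mul s), integral_const_mul, integral_const_mul]
  _ ≤ ∫ x, S.F g (t • πa + s • πb) x ∂S.m := by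
        refine integral_mono (((S.F_integrable hg ha).const_mul t).add
          ((S.F_integrable hg hb).const_mul s)) (S.F_integrable hg hπ) ?_
        intro x
        exact S.F_superadd hg ha hb ht hs hts x


lemma F_le' {g : (Fin (M + 1) → ℝ) → ℝ} (hg : S.Good g) {π : Fin (M + 1) → ℝ}
    (hπ : π ∈ Δ) (x : E) : S.F g π x ≤ S.AA * S.Dsum π x := by
  unfold F
  split_ifs with h
  · exact mul_nonneg S.AA_nonneg (S.Dsum_nonneg hπ x)
  · calc S.Dsum π x * g (fun i => S.D i π x / S.Dsum π x)
        ≤ S.Dsum π x * S.AA :=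
          mul_le_mul_of_nonneg_left (Good.bound S hg (S.ratio_mem hπ h))
            (S.Dsum_nonneg hπ x)
    _ = S.AA * S.Dsum π x := mul_comm _ _

lemma T_measurable {g : (Fin (M + 1) → ℝ) → ℝ} (hg : Measurable g) :
    Measurable (S.T g) := by
  haveI := S.hm
  have hD : ∀ i, Measurable fun q : (Fin (M + 1) → ℝ) × E => S.D i q.1 q.2 := by
    intro i
    simp only [D_eq]
    exact ((S.coef_continuous i).measurable.comp measurable_fst).mul
      ((S.hf_meas i).comp measurable_snd)
  have hDs : Measurable fun q : (Fin (M + 1) → ℝ) × E => S.Dsum q.1 q.2 := by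
    simp only [Dsum]
    exact Finset.measurable_sum _ fun i _ => hD i
  have hF : Measurable (Function.uncurry fun π (x : E) => S.F g π x) := by
    unfold Function.uncurry F
    refine Measurable.ite (hDs (measurableSet_singleton 0)) measurable_const ?_
    exact hDs.mul (hg.comp (measurable_pi_lambda _ fun i => (hD i).div hDs))
  exact (hF.stronglyMeasurable.integral_prod_right).measurable

lemma T_contOn {g : (Fin (M + 1) → ℝ) → ℝ} (hg : S.Good g) :
    ContinuousOn (S.T g) Δ := by
  intro π₀ hπ₀
  have hmem : ∀ᶠ π in nhdsWithin π₀ Δ, π ∈ Δ := eventually_mem_nhdsWithin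
  show Tendsto (S.T g) (nhdsWithin π₀ Δ) (nhds (S.T g π₀))
  simp only [T_eq]
  refine tendsto_integral_filter_of_dominated_convergence
    (fun x => S.AA * ∑ i, 2 * S.f i x)
    (Filter.Eventually.of_forall fun π => (S.F_measurable hg.1 π).aestronglyMeasurable)
    (hmem.mono fun π hπ => Filter.Eventually.of_forall fun x => ?_)
    S.AAbound_integrable
    (Filter.Eventually.of_forall fun x => ?_)
  · show ‖S.F g π x‖ ≤ S.AA * ∑ i, 2 * S.f i x
    rw [Real.norm_eq_abs, abs_of_nonneg (S.F_nonneg hg hπ x)]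
    exact S.F_le hg hπ x
  · show Tendsto (fun π => S.F g π x) (nhdsWithin π₀ Δ) (nhds (S.F g π₀ x))
    by_cases h0 : S.Dsum π₀ x = 0
    · have hF0 : S.F g π₀ x = 0 := by unfold F; exact if_pos h0
      rw [hF0]
      refine squeeze_zero' (hmem.mono fun π hπ => S.F_nonneg hg hπ x)
        (hmem.mono fun π hπ => S.F_le' hg hπ x) ?_
      have h2 : Continuous fun π => S.AA * S.Dsum π x :=
        continuous_const.mul (S.Dsum_continuous x)
      have h1 := h2.tendsto π₀
      simp only [h0, mul_zero] at h1
      exact h1.mono_left nhdsWithin_le_nhds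
    · have hpos : 0 < S.Dsum π₀ x := lt_of_le_of_ne (S.Dsum_nonneg hπ₀ x) (Ne.symm h0)
      have hD : Tendsto (fun π => S.Dsum π x) (nhdsWithin π₀ Δ) (nhds (S.Dsum π₀ x)) :=
        ((S.Dsum_continuous x).tendsto π₀).mono_left nhdsWithin_le_nhds
      have hev : ∀ᶠ π in nhdsWithin π₀ Δ, 0 < S.Dsum π x :=
        hD.eventually (eventually_gt_nhds hpos)
      have hz0 : (fun i => S.D i π₀ x / S.Dsum π₀ x) ∈ Δ := S.ratio_mem hπ₀ h0
      have hzt : Tendsto (fun π => fun i => S.D i π x / S.Dsum π x) (nhdsWithin π₀ Δ)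
          (nhdsWithin (fun i => S.D i π₀ x / S.Dsum π₀ x) Δ) := by
        rw [tendsto_nhdsWithin_iff]
        constructor
        · rw [tendsto_pi_nhds]
          intro i
          have hc : Continuous fun π => S.D i π x := by
            simp only [D_eq]; exact (S.coef_continuous i).mul continuous_const
          exact ((hc.tendsto π₀).mono_left nhdsWithin_le_nhds).div hD h0
        · exact (hev.and hmem).mono fun π h => S.ratio_mem h.2 h.1.ne'
      have hgz : Tendsto (fun π => g fun i => S.D i π x / S.Dsum π x) (nhdsWithin π₀ Δ)
          (nhds (g fun i => S.D i π₀ x / S.Dsum π₀ x)) := Filter.Tendsto.comp (hg.2.1 _ hz0) hzt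
      have hF0 : S.F g π₀ x = S.Dsum π₀ x * g fun i => S.D i π₀ x / S.Dsum π₀ x := by
        unfold F; rw [if_neg h0]
      rw [hF0]
      refine Filter.Tendsto.congr' ?_ (hD.mul hgz)
      exact hev.mono fun π h => by simp only [F]; rw [if_neg h.ne']

lemma Good_hmin : S.Good S.hmin :=
  ⟨S.hmin_measurable, S.hmin_continuous.continuousOn, S.hmin_concaveOn,
    fun _ hπ => S.hmin_nonneg hπ, fun _ _ => le_rfl⟩

lemma lin_concaveOn : ConcaveOn ℝ Δ fun π : Fin (M + 1) → ℝ => S.c * (1 - π 0) := by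
  refine ⟨convex_stdSimplex ℝ _, fun x _ y _ t s ht hs hts => ?_⟩
  simp only [Pi.add_apply, Pi.smul_apply, smul_eq_mul]
  have h : t * (S.c * (1 - x 0)) + s * (S.c * (1 - y 0)) =
      S.c * (1 - (t * x 0 + s * y 0)) := by linear_combination S.c * hts
  exact le_of_eq h

lemma Good_Mop {g : (Fin (M + 1) → ℝ) → ℝ} (hg : S.Good g) : S.Good (S.Mop g) := by
  refine ⟨?_, ?_, ?_, ?_, ?_⟩
  · exact S.hmin_measurable.min
      (((measurable_const.sub (measurable_pi_apply 0)).const_mul S.c).add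
        (S.T_measurable hg.1))
  · have h : ContinuousOn (fun π => S.c * (1 - π 0) + S.T g π) Δ :=
      (continuous_const.mul (continuous_const.sub (continuous_apply 0))).continuousOn.add
        (S.T_contOn hg)
    exact S.hmin_continuous.continuousOn.inf h
  · have h : ConcaveOn ℝ Δ fun π => S.c * (1 - π 0) + S.T g π :=
      S.lin_concaveOn.add (S.T_concaveOn hg)
    have := S.hmin_concaveOn.inf h
    exact this
  · intro π hπ
    refine le_min (S.hmin_nonneg hπ) (add_nonneg (mul_nonneg S.hc.le ?_) (S.T_nonneg hg hπ))
    have := mem_le_one' hπ 0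
    linarith
  · exact fun π _ => min_le_left _ _

lemma Good_V (N : ℕ) : S.Good (S.V N) := by
  induction N with
  | zero => exact S.Good_hmin
  | succ N ih =>
    have h : S.V (N + 1) = S.Mop (S.V N) := Function.iterate_succ_apply' _ _ _
    rw [h]
    exact S.Good_Mop ih

lemma V_succ_eq (N : ℕ) : S.V (N + 1) = S.Mop (S.V N) := Function.iterate_succ_apply' _ _ _

lemma V_le_hmin (N : ℕ) {π : Fin (M + 1) → ℝ} (hπ : π ∈ Δ) : S.V N π ≤ S.hmin π :=
  (S.Good_V N).2.2.2.2 π hπ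

lemma V_nonneg (N : ℕ) {π : Fin (M + 1) → ℝ} (hπ : π ∈ Δ) : 0 ≤ S.V N π :=
  (S.Good_V N).2.2.2.1 π hπ

lemma V_succ_le (N : ℕ) {π : Fin (M + 1) → ℝ} (hπ : π ∈ Δ) :
    S.V (N + 1) π ≤ S.V N π := by
  induction N generalizing π with
  | zero =>
    rw [S.V_succ_eq 0]
    exact min_le_left _ _
  | succ N ih =>
    rw [S.V_succ_eq (N + 1), S.V_succ_eq N]
    show min (S.hmin π) (S.c * (1 - π 0) + S.T (S.Mop (S.V N)) π) ≤
      min (S.hmin π) (S.c * (1 - π 0) + S.T (S.V N) π)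
    refine min_le_min le_rfl (add_le_add_right ?_ _)
    refine S.T_mono (S.Good_Mop (S.Good_V N)) (S.Good_V N) ?_ hπ
    intro π' hπ'
    have h2 := ih hπ'
    rw [S.V_succ_eq N] at h2
    exact h2

lemma V_antitone {π : Fin (M + 1) → ℝ} (hπ : π ∈ Δ) : Antitone fun N => S.V N π :=
  antitone_nat_of_succ_le fun N => S.V_succ_le N hπ

lemma charN (j : Fin M) (N : ℕ) {π : Fin (M + 1) → ℝ} (hπ : π ∈ Δ) :
    (S.V N π = S.hmin π ∧ S.hmin π = S.hj j π) ↔ S.hj j π ≤ S.V N π := by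
  constructor
  · rintro ⟨h1, h2⟩; rw [h1, h2]
  · intro h
    have h1 := S.V_le_hmin N hπ
    have h2 := S.hmin_le_hj j π
    constructor <;> linarith

lemma GammaN_eq (j : Fin M) (N : ℕ) : S.GammaN j N =
    stdSimplex ℝ (Fin (M + 1)) ∩ (fun π => S.V N π - S.hj j π) ⁻¹' Set.Ici 0 := by
  ext π
  simp only [GammaN, Set.mem_setOf_eq, Set.mem_inter_iff, Set.mem_preimage, Set.mem_Ici,
    sub_nonneg]
  constructor
  · rintro ⟨hπ, h⟩; exact ⟨hπ, (S.charN j N hπ).1 h⟩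
  · rintro ⟨hπ, h⟩; exact ⟨hπ, (S.charN j N hπ).2 h⟩

lemma single_mem' (j : Fin M) : Pi.single (j.succ : Fin (M + 1)) (1 : ℝ) ∈ Δ := by
  constructor
  · intro i; rw [Pi.single_apply]; split_ifs <;> norm_num
  · simp [Pi.single_apply, Finset.sum_ite_eq']

lemma hj_single (j : Fin M) : S.hj j (Pi.single (j.succ : Fin (M + 1)) (1 : ℝ)) = 0 := by
  unfold hj
  rw [Finset.sum_eq_single (j.succ : Fin (M + 1))]
  · rw [Pi.single_eq_same, one_mul, S.haii j]
  · intro i _ hne; rw [Pi.single_apply, if_neg hne, zero_mul]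
  · intro h; exact absurd (Finset.mem_univ _) h

lemma hmin_single (j : Fin M) :
    S.hmin (Pi.single (j.succ : Fin (M + 1)) (1 : ℝ)) = 0 :=
  le_antisymm (by rw [← S.hj_single j]; exact S.hmin_le_hj j _)
    (S.hmin_nonneg (single_mem' j))

lemma V_single (N : ℕ) (j : Fin M) :
    S.V N (Pi.single (j.succ : Fin (M + 1)) (1 : ℝ)) = 0 :=
  le_antisymm (by rw [← S.hmin_single j]; exact S.V_le_hmin N (single_mem' j))
    (S.V_nonneg N (single_mem' j))

lemma single_mem_GammaN (j : Fin M) (N : ℕ) :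
    Pi.single (j.succ : Fin (M + 1)) (1 : ℝ) ∈ S.GammaN j N :=
  ⟨single_mem' j, by rw [S.V_single N j, S.hmin_single j],
    by rw [S.hmin_single j, S.hj_single j]⟩

end DiagSetup

/-- for every `j`, `(Γ_N^{(j)})_N` is a nonincreasing sequence of
nonempty, closed, convex subsets of `S^M`; `Γ^{(j)} = ∩_N Γ_N^{(j)}` is nonempty,
closed and convex; and `Γ = ∪_j Γ^{(j)} = ∩_N Γ_N`. -/
theorem stopping_regions_structure {E : Type*} [MeasurableSpace E] {M : ℕ}
    (S : DiagSetup E M) (V0 : (Fin (M + 1) → ℝ) → ℝ)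
    (hV0 : ∀ π ∈ stdSimplex ℝ (Fin (M + 1)),
      Tendsto (fun N => S.V N π) atTop (nhds (V0 π))) :
    (∀ j : Fin M,
      (∀ N : ℕ, S.GammaN j (N + 1) ⊆ S.GammaN j N) ∧
      (∀ N : ℕ, (S.GammaN j N).Nonempty ∧ IsClosed (S.GammaN j N) ∧
        Convex ℝ (S.GammaN j N)) ∧
      S.Gamma V0 j = ⋂ N : ℕ, S.GammaN j N ∧
      (S.Gamma V0 j).Nonempty ∧ IsClosed (S.Gamma V0 j) ∧ Convex ℝ (S.Gamma V0 j)) ∧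
    S.GammaAll V0 = ⋃ j : Fin M, S.Gamma V0 j ∧
    S.GammaAll V0 = ⋂ N : ℕ, S.GammaNAll N := by
  have hV0le : ∀ π ∈ stdSimplex ℝ (Fin (M + 1)), ∀ N, V0 π ≤ S.V N π := by
    intro π hπ N
    exact le_of_tendsto (hV0 π hπ)
      (Filter.eventually_atTop.2 ⟨N, fun k hk => S.V_antitone hπ hk⟩)
  have hV0hmin : ∀ π ∈ stdSimplex ℝ (Fin (M + 1)), V0 π ≤ S.hmin π :=
    fun π hπ => hV0le π hπ 0
  have hlim : ∀ π ∈ stdSimplex ℝ (Fin (M + 1)),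
      (∀ N, S.V N π = S.hmin π) → V0 π = S.hmin π := by
    intro π hπ h
    have ht : Tendsto (fun N => S.V N π) atTop (nhds (S.hmin π)) := by
      have he : (fun N => S.V N π) = fun _ => S.hmin π := funext fun N => h N
      rw [he]; exact tendsto_const_nhds
    exact tendsto_nhds_unique (hV0 π hπ) ht
  have hclosed : ∀ (j : Fin M) (N : ℕ), IsClosed (S.GammaN j N) := by
    intro j N
    rw [S.GammaN_eq j N]
    exact ContinuousOn.preimage_isClosed_of_isClosed
      (((S.Good_V N).2.1).sub ((S.hj_continuous j).continuousOn))
      (isClosed_stdSimplex _ _) isClosed_Ici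
  have hconvex : ∀ (j : Fin M) (N : ℕ), Convex ℝ (S.GammaN j N) := by
    intro j N
    have h := ((S.Good_V N).2.2.1.sub (S.hj_convexOn j)).convex_ge 0
    convert h using 1
    rw [S.GammaN_eq j N]
    ext π
    simp [Set.mem_inter_iff, sub_nonneg, Pi.sub_apply]
  have hGammaInt : ∀ j : Fin M, S.Gamma V0 j = ⋂ N : ℕ, S.GammaN j N := by
    intro j
    ext π
    simp only [DiagSetup.Gamma, DiagSetup.GammaN, Set.mem_setOf_eq, Set.mem_iInter]
    constructor
    · rintro ⟨hπ, h1, h2⟩ N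
      refine ⟨hπ, (S.charN j N hπ).2 ?_⟩
      have he : S.hj j π = V0 π := (h1.trans h2).symm
      rw [he]
      exact hV0le π hπ N
    · intro h
      have hπ := (h 0).1
      have h2 : S.hmin π = S.hj j π := (h 0).2.2
      exact ⟨hπ, hlim π hπ fun N => (h N).2.1, h2⟩
  have hwit : ∀ j : Fin M, Pi.single (j.succ : Fin (M + 1)) (1 : ℝ) ∈ S.Gamma V0 j := by
    intro j
    have ht : Tendsto (fun N => S.V N (Pi.single (j.succ : Fin (M + 1)) (1 : ℝ)))
        atTop (nhds 0) := by
      have he : (fun N => S.V N (Pi.single (j.succ : Fin (M + 1)) (1 : ℝ))) =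
          fun _ => (0 : ℝ) := funext fun N => S.V_single N j
      rw [he]; exact tendsto_const_nhds
    have hv : V0 (Pi.single (j.succ : Fin (M + 1)) (1 : ℝ)) = 0 :=
      tendsto_nhds_unique (hV0 _ (DiagSetup.single_mem' j)) ht
    exact ⟨DiagSetup.single_mem' j, by rw [hv, S.hmin_single],
      by rw [S.hmin_single, S.hj_single]⟩
  refine ⟨fun j => ⟨?_, ?_, ?_, ?_, ?_, ?_⟩, ?_, ?_⟩
  · -- monotone
    rintro N π ⟨hπ, h1, h2⟩
    refine ⟨hπ, (S.charN j N hπ).2 ?_⟩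
    have h3 := S.V_succ_le N hπ
    linarith
  · exact fun N => ⟨⟨_, S.single_mem_GammaN j N⟩, hclosed j N, hconvex j N⟩
  · exact hGammaInt j
  · exact ⟨_, hwit j⟩
  · rw [hGammaInt j]; exact isClosed_iInter fun N => hclosed j N
  · rw [hGammaInt j]; exact convex_iInter fun N => hconvex j N
  · -- union
    ext π
    simp only [DiagSetup.GammaAll, DiagSetup.Gamma, Set.mem_setOf_eq, Set.mem_iUnion]
    constructor
    · rintro ⟨hπ, h1⟩
      haveI : Nonempty (Fin M) := ⟨⟨0, S.hM⟩⟩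
      obtain ⟨j, hj⟩ := exists_eq_ciInf_of_finite (f := fun j => S.hj j π)
      exact ⟨j, hπ, h1, hj.symm⟩
    · rintro ⟨j, hπ, h1, _⟩
      exact ⟨hπ, h1⟩
  · -- intersection over all
    ext π
    simp only [DiagSetup.GammaAll, DiagSetup.GammaNAll, Set.mem_setOf_eq, Set.mem_iInter]
    constructor
    · rintro ⟨hπ, h1⟩ N
      refine ⟨hπ, le_antisymm (S.V_le_hmin N hπ) ?_⟩
      rw [← h1]
      exact hV0le π hπ N
    · intro h
      have hπ := (h 0).1
      exact ⟨hπ, hlim π hπ fun N => (h N).2⟩
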